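/- Let 0 ≤ s ≤ 1/2, 0 ≤ p ≤ 1, and define p_a = (√(sp) + √((1−s)(1−p)))². Then (p_a + p)/2 ≤ (1 + √s)/2 ≤ (1 + 1/√2)/2 < 0.9. -/
import Mathlib


lemma sqrt2_gt : (5/4 : ℝ) < Real.sqrt 2 := by
  have h := Real.sq_sqrt (by norm_num : (0:ℝ) ≤ 2)
  nlinarith [Real.sqrt_nonneg 2]

lemma third_part : (1 + 1 / Real.sqrt 2) / 2 < 0.9 := by
  have h2 := sqrt2_gt
  have hpos : (0:ℝ) < Real.sqrt 2 := by linarith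
  have h3 : 1 / Real.sqrt 2 < 4/5 := by
    rw [div_lt_iff₀ hpos]; nlinarith
  have : (0.9 : ℝ) = 9/10 := by norm_num
  linarith

/-- Soundness inequality for the QMA₁ verifier: for `0 ≤ s ≤ 1/2` and `0 ≤ p ≤ 1`, with
`p_a = (√(sp) + √((1−s)(1−p)))²`, one has `(p_a + p)/2 ≤ (1+√s)/2 ≤ (1+1/√2)/2 < 0.9`. -/
theorem stmt_7 (s p : ℝ) (hs0 : 0 ≤ s) (hs : s ≤ 1/2) (hp0 : 0 ≤ p) (hp1 : p ≤ 1) :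
    ((Real.sqrt (s * p) + Real.sqrt ((1 - s) * (1 - p))) ^ 2 + p) / 2
        ≤ (1 + Real.sqrt s) / 2
    ∧ (1 + Real.sqrt s) / 2 ≤ (1 + 1 / Real.sqrt 2) / 2
    ∧ (1 + 1 / Real.sqrt 2) / 2 < 0.9 := by
  have hs1 : s ≤ 1 := hs.trans (by norm_num)
  set t := Real.sqrt s with ht
  set x := Real.sqrt p with hx
  set y := Real.sqrt (1 - p) with hy
  have ht0 : 0 ≤ t := Real.sqrt_nonneg s
  have ht1 : t ≤ 1 := by
    rw [ht, show (1:ℝ) = Real.sqrt 1 by simp]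
    exact Real.sqrt_le_sqrt hs1
  have ht2 : t ^ 2 = s := Real.sq_sqrt hs0
  have hx2 : x ^ 2 = p := Real.sq_sqrt hp0
  have hy2 : y ^ 2 = 1 - p := Real.sq_sqrt (by linarith)
  have hx0 : 0 ≤ x := Real.sqrt_nonneg p
  have hy0 : 0 ≤ y := Real.sqrt_nonneg _
  have hw : Real.sqrt (1 - s) = Real.sqrt (1 - t^2) := by rw [ht2]
  have hsp : Real.sqrt (s * p) = t * x := Real.sqrt_mul hs0 p
  have hsp2 : Real.sqrt ((1 - s) * (1 - p)) = Real.sqrt (1 - t^2) * y :=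
    Real.sqrt_mul (by linarith) _ |>.trans (by rw [hw])
  constructor
  · rw [hsp, hsp2]
    have key : 2 * (t * Real.sqrt (1 - t^2)) * (x * y)
        ≤ t * (1 - t) * x^2 + t * (1 + t) * y^2 := by
      have h1 : Real.sqrt (t * (1 - t)) * x * (Real.sqrt (t * (1 + t)) * y)
          = t * Real.sqrt (1 - t^2) * (x * y) := by
        rw [show Real.sqrt (t * (1 - t)) * x * (Real.sqrt (t * (1 + t)) * y)
            = Real.sqrt (t * (1 - t)) * Real.sqrt (t * (1 + t)) * (x * y) by ring,
          ← Real.sqrt_mul (by nlinarith)]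
        congr 1
        rw [show t * (1 - t) * (t * (1 + t)) = t^2 * (1 - t^2) by ring,
          Real.sqrt_mul (by positivity), Real.sqrt_sq ht0]
      have h2 := sq_nonneg (Real.sqrt (t * (1 - t)) * x - Real.sqrt (t * (1 + t)) * y)
      have h3 : (Real.sqrt (t * (1 - t)) * x)^2 = t * (1 - t) * x^2 := by
        rw [mul_pow, Real.sq_sqrt (by nlinarith)]
      have h4 : (Real.sqrt (t * (1 + t)) * y)^2 = t * (1 + t) * y^2 := by
        rw [mul_pow, Real.sq_sqrt (by nlinarith)]
      nlinarith [h1, h2, h3, h4]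
    have hw2 : (Real.sqrt (1 - t^2))^2 = 1 - t^2 := Real.sq_sqrt (by nlinarith)
    have hxy : x^2 + y^2 = 1 := by rw [hx2, hy2]; ring
    nlinarith [key, hw2, hxy]
  constructor
  · have : t ≤ 1 / Real.sqrt 2 := by
      rw [ht, show (1 : ℝ) / Real.sqrt 2 = Real.sqrt (1/2) by
        rw [one_div, ← Real.sqrt_inv]; norm_num]
      exact Real.sqrt_le_sqrt hs
    linarith
  · exact third_part
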